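/- Let 1 < q < ∞, let 0 < ρ₁ < 1 < ρ₂, and let ω be a weight on ℤ satisfying ∑_{n∈ℤ} ω(n)^{-q} < ∞ and (ω^{-q} ⋆ ω^{-q})(n) ≤ ω(n)^{-q} for all n ∈ ℤ. If ∑_{n∈ℤ} x^{qn} ω(n)^{-q} < ∞ for every x ∈ (ρ₁, ρ₂), then ∑_{n∈ℤ} x^{qn} ω(n)^{-q} ≤ 1 for every x ∈ [ρ₁, ρ₂]. -/
import Mathlib


open scoped BigOperators

/-- A weight on `ℤ`: `ω : ℤ → [1,∞)` with `ω(m+n) ≤ ω(m)ω(n)`. -/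
def IsWeight (ω : ℤ → ℝ) : Prop :=
  (∀ n, 1 ≤ ω n) ∧ ∀ m n, ω (m + n) ≤ ω m * ω n

/-- `ρ₁(ω) = sup{ω(-n)^{-1/n} : n ∈ ℕ, n ≥ 1}`. -/
noncomputable def rho1 (ω : ℤ → ℝ) : ℝ :=
  sSup {x : ℝ | ∃ n : ℕ, 0 < n ∧ x = ω (-(n : ℤ)) ^ (-(1 : ℝ) / (n : ℝ))}

/-- `ρ₂(ω) = inf{ω(n)^{1/n} : n ∈ ℕ, n ≥ 1}`. -/
noncomputable def rho2 (ω : ℤ → ℝ) : ℝ :=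
  sInf {x : ℝ | ∃ n : ℕ, 0 < n ∧ x = ω (n : ℤ) ^ ((1 : ℝ) / (n : ℝ))}

/-- A weight is admissible if `ρ₁(ω) = ρ₂(ω) = 1`. -/
def IsAdmissible (ω : ℤ → ℝ) : Prop := rho1 ω = 1 ∧ rho2 ω = 1

open scoped Topology

def shiftEquiv' : ℤ × ℤ ≃ ℤ × ℤ :=
  ⟨fun p => (p.1 + p.2, p.1), fun p => (p.2, p.1 - p.2),
   fun p => by simp, fun p => by simp⟩

lemma interior_bound (q : ℝ) (hq : 0 < q) (ω : ℤ → ℝ) (hω : IsWeight ω)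
    (hconv : ∀ n : ℤ, (∑' k : ℤ, ω k ^ (-q) * ω (n - k) ^ (-q)) ≤ ω n ^ (-q))
    (x : ℝ) (hx : 0 < x) (hsumx : Summable fun n : ℤ => x ^ (q * (n : ℝ)) * ω n ^ (-q))
    (hsum : Summable fun n : ℤ => ω n ^ (-q)) :
    (∑' n : ℤ, x ^ (q * (n : ℝ)) * ω n ^ (-q)) ≤ 1 := by
  set u : ℤ → ℝ := fun n => x ^ (q * (n : ℝ)) * ω n ^ (-q) with hu
  have hωpos : ∀ n, 0 < ω n := fun n => lt_of_lt_of_le one_pos (hω.1 n)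
  have hupos : ∀ n, 0 < u n := fun n =>
    mul_pos (Real.rpow_pos_of_pos hx _) (Real.rpow_pos_of_pos (hωpos n) _)
  have hu0 : ∀ n, 0 ≤ u n := fun n => (hupos n).le
  -- summability of the ω-convolution terms
  have hwle : ∀ m : ℤ, ω m ^ (-q) ≤ 1 := fun m =>
    Real.rpow_le_one_of_one_le_of_nonpos (hω.1 m) (by linarith)
  have hw0 : ∀ m : ℤ, 0 ≤ ω m ^ (-q) := fun m => (Real.rpow_pos_of_pos (hωpos m) _).le
  have hconvsum : ∀ n : ℤ, Summable fun k : ℤ => ω k ^ (-q) * ω (n - k) ^ (-q) := by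
    intro n
    refine Summable.of_nonneg_of_le (fun k => mul_nonneg (hw0 k) (hw0 _)) (fun k => ?_) hsum
    calc ω k ^ (-q) * ω (n - k) ^ (-q) ≤ ω k ^ (-q) * 1 :=
          mul_le_mul_of_nonneg_left (hwle _) (hw0 k)
      _ = ω k ^ (-q) := mul_one _
  -- convolution identity for u
  have hid : ∀ n k : ℤ, u k * u (n - k) = x ^ (q * (n : ℝ)) * (ω k ^ (-q) * ω (n - k) ^ (-q)) := by
    intro n k
    have : x ^ (q * (k : ℝ)) * x ^ (q * ((n - k : ℤ) : ℝ)) = x ^ (q * (n : ℝ)) := by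
      rw [← Real.rpow_add hx]
      congr 1
      push_cast
      ring
    simp only [hu]
    rw [← this]
    ring
  have husub : ∀ n : ℤ, Summable fun k : ℤ => u k * u (n - k) := by
    intro n
    have := (hconvsum n).mul_left (x ^ (q * (n : ℝ)))
    refine this.congr fun k => ?_
    rw [hid n k]
  have hub : ∀ n : ℤ, (∑' k : ℤ, u k * u (n - k)) ≤ u n := by
    intro n
    have h1 : (∑' k : ℤ, u k * u (n - k))
        = x ^ (q * (n : ℝ)) * ∑' k : ℤ, ω k ^ (-q) * ω (n - k) ^ (-q) := by
      rw [← tsum_mul_left]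
      exact tsum_congr fun k => hid n k
    rw [h1]
    exact mul_le_mul_of_nonneg_left (hconv n) (Real.rpow_pos_of_pos hx _).le
  -- move to ENNReal
  set g : ℤ → ENNReal := fun n => ENNReal.ofReal (u n) with hg
  set T : ENNReal := ∑' n : ℤ, g n with hT
  have hTof : T = ENNReal.ofReal (∑' n : ℤ, u n) :=
    (ENNReal.ofReal_tsum_of_nonneg hu0 hsumx).symm
  have hTtop : T ≠ ⊤ := by rw [hTof]; exact ENNReal.ofReal_ne_top
  have hT0 : T ≠ 0 := by
    intro h
    have := ENNReal.le_tsum (f := g) 0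
    rw [← hT, h, le_zero_iff] at this
    exact absurd this (by simp [hg, hupos 0, ENNReal.ofReal_eq_zero, not_le])
  -- key inequality T * T ≤ T
  have hkey : T * T ≤ T := by
    have h1 : T * T = ∑' p : ℤ × ℤ, g p.1 * g p.2 := by
      rw [ENNReal.tsum_prod (f := fun a b => g a * g b)]
      simp_rw [ENNReal.tsum_mul_left]
      rw [ENNReal.tsum_mul_right, ← hT]
    have h2 : (∑' p : ℤ × ℤ, g p.1 * g p.2)
        = ∑' p : ℤ × ℤ, g p.2 * g (p.1 - p.2) := by
      rw [← Equiv.tsum_eq shiftEquiv' (fun p : ℤ × ℤ => g p.2 * g (p.1 - p.2))]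
      exact tsum_congr fun p => by simp [shiftEquiv']
    have h3 : (∑' p : ℤ × ℤ, g p.2 * g (p.1 - p.2))
        = ∑' n : ℤ, ∑' k : ℤ, g k * g (n - k) :=
      ENNReal.tsum_prod (f := fun n k => g k * g (n - k))
    have h4 : ∀ n : ℤ, (∑' k : ℤ, g k * g (n - k)) ≤ g n := by
      intro n
      have : (∑' k : ℤ, g k * g (n - k)) = ENNReal.ofReal (∑' k : ℤ, u k * u (n - k)) := by
        rw [ENNReal.ofReal_tsum_of_nonneg (fun k => mul_nonneg (hu0 k) (hu0 _)) (husub n)]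
        exact tsum_congr fun k => (ENNReal.ofReal_mul (hu0 k)).symm
      rw [this]
      exact ENNReal.ofReal_le_ofReal (hub n)
    calc T * T = ∑' n : ℤ, ∑' k : ℤ, g k * g (n - k) := by rw [h1, h2, h3]
      _ ≤ ∑' n : ℤ, g n := ENNReal.tsum_le_tsum h4
      _ = T := hT.symm
  have hT1 : T ≤ 1 := by
    have : T * T ≤ 1 * T := by simpa using hkey
    exact (ENNReal.mul_le_mul_iff_left hT0 hTtop).mp this
  rw [hTof] at hT1
  have := (ENNReal.ofReal_le_one).mp hT1
  exact this


/-- **Lemma 3.1.** Let `1 < q < ∞`, `0 < ρ₁ < 1 < ρ₂`, and let `ω` be a weight on `ℤ` with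
`∑ ω(n)^{-q} < ∞` and `ω^{-q} ⋆ ω^{-q} ≤ ω^{-q}`.  If `∑_{n∈ℤ} x^{qn} ω(n)^{-q} < ∞` for
every `x ∈ (ρ₁, ρ₂)`, then `∑_{n∈ℤ} x^{qn} ω(n)^{-q} ≤ 1` for every `x ∈ [ρ₁, ρ₂]`. -/
theorem stmt5 (q : ℝ) (hq : 1 < q) (ρ₁ ρ₂ : ℝ) (h0 : 0 < ρ₁) (h1 : ρ₁ < 1) (h2 : 1 < ρ₂)
    (ω : ℤ → ℝ) (hω : IsWeight ω)
    (hsum : Summable fun n : ℤ => ω n ^ (-q))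
    (hconv : ∀ n : ℤ, (∑' k : ℤ, ω k ^ (-q) * ω (n - k) ^ (-q)) ≤ ω n ^ (-q))
    (hfin : ∀ x ∈ Set.Ioo ρ₁ ρ₂, Summable fun n : ℤ => x ^ (q * (n : ℝ)) * ω n ^ (-q)) :
    ∀ x ∈ Set.Icc ρ₁ ρ₂,
      (Summable fun n : ℤ => x ^ (q * (n : ℝ)) * ω n ^ (-q)) ∧
      (∑' n : ℤ, x ^ (q * (n : ℝ)) * ω n ^ (-q)) ≤ 1 := by
  have hωpos : ∀ n, 0 < ω n := fun n => lt_of_lt_of_le one_pos (hω.1 n)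
  -- interior bound
  have hint : ∀ y ∈ Set.Ioo ρ₁ ρ₂, (∑' n : ℤ, y ^ (q * (n : ℝ)) * ω n ^ (-q)) ≤ 1 := by
    intro y hy
    exact interior_bound q (by linarith) ω hω hconv y (lt_trans h0 hy.1) (hfin y hy) hsum
  intro x hx
  have hxpos : 0 < x := lt_of_lt_of_le h0 hx.1
  have hnn : ∀ n : ℤ, 0 ≤ x ^ (q * (n : ℝ)) * ω n ^ (-q) := fun n =>
    mul_nonneg (Real.rpow_pos_of_pos hxpos _).le (Real.rpow_pos_of_pos (hωpos n) _).le
  -- finite partial sums are ≤ 1 by a continuity/closure argument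
  have hfs : ∀ F : Finset ℤ, (∑ n ∈ F, x ^ (q * (n : ℝ)) * ω n ^ (-q)) ≤ 1 := by
    intro F
    have hρ : ρ₁ ≠ ρ₂ := ne_of_lt (lt_trans h1 h2)
    have hclo : x ∈ closure (Set.Ioo ρ₁ ρ₂) := by
      rw [closure_Ioo hρ]; exact hx
    have hneb : (nhdsWithin x (Set.Ioo ρ₁ ρ₂)).NeBot :=
      mem_closure_iff_nhdsWithin_neBot.mp hclo
    have htend : Filter.Tendsto (fun y : ℝ => ∑ n ∈ F, y ^ (q * (n : ℝ)) * ω n ^ (-q))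
        (nhdsWithin x (Set.Ioo ρ₁ ρ₂)) (𝓝 (∑ n ∈ F, x ^ (q * (n : ℝ)) * ω n ^ (-q))) := by
      refine tendsto_finset_sum F fun n _ => ?_
      have hc : ContinuousAt (fun y : ℝ => y ^ (q * (n : ℝ)) * ω n ^ (-q)) x :=
        (Real.continuousAt_rpow_const x _ (Or.inl hxpos.ne')).mul continuousAt_const
      exact hc.continuousWithinAt
    refine le_of_tendsto htend ?_
    filter_upwards [self_mem_nhdsWithin] with y hy
    calc (∑ n ∈ F, y ^ (q * (n : ℝ)) * ω n ^ (-q))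
        ≤ ∑' n : ℤ, y ^ (q * (n : ℝ)) * ω n ^ (-q) := by
          refine Summable.sum_le_tsum F (fun n _ => ?_) (hfin y hy)
          exact mul_nonneg (Real.rpow_pos_of_pos (lt_trans h0 hy.1) _).le
            (Real.rpow_pos_of_pos (hωpos n) _).le
      _ ≤ 1 := hint y hy
  have hsummx : Summable fun n : ℤ => x ^ (q * (n : ℝ)) * ω n ^ (-q) :=
    summable_of_sum_le hnn hfs
  exact ⟨hsummx, Summable.tsum_le_of_sum_le hsummx hfs⟩
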